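/- Let d, m ≥ 1 be integers, let Λ be a set, and let a : ({1,…,d} → Λ) → ℂ be a finitely supported family of complex numbers. Let π be an ε_d-partition of [2dm]. For a function I : [2dm] → Λ, write I = (i₁,…,i_{2m}) where i_j : {1,…,d} → Λ is given by i_j(l) = I((j−1)d + l). Then Σ_{I : [2dm] → Λ, ker I ≥ π} |a(i₁)|·|a(i₂)|···|a(i_{2m})| ≤ (Σ_{i : {1,…,d} → Λ} |a(i)|²)^m (the left-hand sum has only finitely many nonzero terms since a is finitely supported). -/

import Mathlib

open Finset

/-- Two elements lie in the same block of the partition `P`. -/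
def SameBlock {N : ℕ} (P : Finpartition (univ : Finset (Fin N))) (s t : Fin N) : Prop :=
  ∃ B ∈ P.parts, s ∈ B ∧ t ∈ B

/-- A partition of `[N]` is non-crossing if there are no `s₁ < t₁ < s₂ < t₂` with
`s₁ ∼ s₂`, `t₁ ∼ t₂` but `s₁ ≁ t₁`. -/
def NonCrossing {N : ℕ} (P : Finpartition (univ : Finset (Fin N))) : Prop :=
  ∀ s₁ t₁ s₂ t₂ : Fin N, s₁ < t₁ → t₁ < s₂ → s₂ < t₂ →
    SameBlock P s₁ s₂ → SameBlock P t₁ t₂ → SameBlock P s₁ t₁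

/-- Every block has even cardinality. -/
def EvenPartition {N : ℕ} (P : Finpartition (univ : Finset (Fin N))) : Prop :=
  ∀ B ∈ P.parts, Even B.card

/-- The (two-valued) function `ε` alternates along each block of `P`, listed in
increasing order. -/
def Alternating {N : ℕ} (ε : Fin N → Bool) (P : Finpartition (univ : Finset (Fin N))) : Prop :=
  ∀ B ∈ P.parts, (Finset.sort B (· ≤ ·)).Chain' (fun a b => ε a ≠ ε b)

/-- An `ε`-partition: an even partition on each block of which `ε` alternates. -/
def EpsPartition {N : ℕ} (ε : Fin N → Bool) (P : Finpartition (univ : Finset (Fin N))) : Prop :=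
  EvenPartition P ∧ Alternating ε P

/-- A pairing: every block has exactly two elements. -/
def IsPairing {N : ℕ} (P : Finpartition (univ : Finset (Fin N))) : Prop :=
  ∀ B ∈ P.parts, B.card = 2

/-- `σ` refines `π`: every block of `σ` is contained in a block of `π` (i.e. `σ ≤ π`). -/
def Refines {N : ℕ} (σ π : Finpartition (univ : Finset (Fin N))) : Prop :=
  ∀ B ∈ σ.parts, ∃ C ∈ π.parts, B ⊆ C

/-- The pattern `ε_d = (1^d ∗^d)^m` on `[2dm]` (0-based; `true` codes `1`, `false` codes `∗`). -/
def epsd (d m : ℕ) : Fin (2*d*m) → Bool := fun j => decide ((j : ℕ) / d % 2 = 0)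

/-- `ker I ≥ π` : the function `I` is constant on every block of `π`. -/
def KerGe {N : ℕ} {Λ : Type*} (π : Finpartition (univ : Finset (Fin N))) (I : Fin N → Λ) : Prop :=
  ∀ B ∈ π.parts, ∀ s ∈ B, ∀ t ∈ B, I s = I t

/-- The position `(j-1)d + l` in `[2dm]`, splitting `[2dm]` into `2m` consecutive
segments of length `d`. -/
def seg (d m : ℕ) (j : Fin (2*m)) (l : Fin d) : Fin (2*d*m) :=
  ⟨j.1 * d + l.1, by
    have hj : j.1 + 1 ≤ 2*m := j.2
    have hl : l.1 < d := l.2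
    calc j.1 * d + l.1 < j.1 * d + d := by linarith
      _ = (j.1 + 1) * d := by ring
      _ ≤ (2*m) * d := by gcongr
      _ = 2*d*m := by ring⟩





section A
variable {Λ : Type*} {d m : ℕ}

private lemma div_lt_two_m (hd : 1 ≤ d) (p : Fin (2*d*m)) : p.1 / d < 2 * m := by
  have h2 := p.2
  rw [Nat.div_lt_iff_lt_mul (by omega : 0 < d)]
  calc p.1 < 2*d*m := h2
    _ = 2*m*d := by ring

private lemma div_div_lt (hd : 1 ≤ d) (p : Fin (2*d*m)) : p.1 / d / 2 < m := by
  have h := div_lt_two_m hd p; omega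

private def jdx (b : Bool) (k : Fin m) : Fin (2*m) :=
  ⟨2 * k.1 + (bif b then 0 else 1), by have := k.2; cases b <;> simp <;> omega⟩

private lemma seg_div (hd : 1 ≤ d) (j : Fin (2*m)) (l : Fin d) :
    (seg d m j l).1 / d = j.1 := by
  show (j.1 * d + l.1) / d = j.1
  rw [mul_comm, Nat.mul_add_div (by omega : 0 < d), Nat.div_eq_of_lt l.2, add_zero]

private lemma seg_mod (hd : 1 ≤ d) (j : Fin (2*m)) (l : Fin d) :
    (seg d m j l).1 % d = l.1 := by
  show (j.1 * d + l.1) % d = l.1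
  rw [mul_comm, Nat.mul_add_mod, Nat.mod_eq_of_lt l.2]

private lemma seg_of_idx (hd : 1 ≤ d) (b : Bool) (p : Fin (2*d*m)) (h : epsd d m p = b) :
    seg d m (jdx b ⟨p.1/d/2, div_div_lt hd p⟩) ⟨p.1 % d, Nat.mod_lt _ hd⟩ = p := by
  apply Fin.ext
  show (2 * (p.1/d/2) + (bif b then 0 else 1)) * d + p.1 % d = p.1
  have h2 : p.1 / d % 2 = (bif b then 0 else 1) := by
    cases b <;> simp only [cond_false, cond_true] <;> simp [epsd] at h <;> omega
  have h3 : 2 * (p.1/d/2) + (bif b then 0 else 1) = p.1 / d := by omega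
  rw [h3, Nat.div_add_mod']

private lemma epsd_seg (hd : 1 ≤ d) (b : Bool) (k : Fin m) (l : Fin d) :
    epsd d m (seg d m (jdx b k) l) = b := by
  simp only [epsd, seg_div hd]
  show decide ((2 * k.1 + (bif b then 0 else 1)) % 2 = 0) = b
  cases b <;> simp <;> omega
end A
section B
variable {Λ : Type*} {d m : ℕ}

private def extJ (d m : ℕ) (hd : 1 ≤ d) (pr : Fin (2*d*m) → Fin (2*d*m)) (b : Bool)
    (J : Fin m → Fin d → Λ) (p : Fin (2*d*m)) : Λ :=
  if epsd d m p = b then J ⟨p.1/d/2, div_div_lt hd p⟩ ⟨p.1 % d, Nat.mod_lt _ hd⟩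
  else J ⟨(pr p).1/d/2, div_div_lt hd _⟩ ⟨(pr p).1 % d, Nat.mod_lt _ hd⟩

private lemma extJ_seg (hd : 1 ≤ d) (pr : Fin (2*d*m) → Fin (2*d*m)) (b : Bool)
    (J : Fin m → Fin d → Λ) (k : Fin m) (l : Fin d) :
    extJ d m hd pr b J (seg d m (jdx b k) l) = J k l := by
  rw [extJ, if_pos (epsd_seg hd b k l)]
  refine congr_arg₂ J (Fin.ext ?_) (Fin.ext ?_)
  · show (seg d m (jdx b k) l).1 / d / 2 = k.1
    rw [seg_div hd]
    show (2 * k.1 + (bif b then 0 else 1)) / 2 = k.1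
    cases b <;> simp <;> omega
  · exact seg_mod hd _ _

private lemma range_extJ (hd : 1 ≤ d) (pr : Fin (2*d*m) → Fin (2*d*m))
    (hinv : ∀ p, pr (pr p) = p) (hflip : ∀ p, epsd d m (pr p) = ! epsd d m p) (b : Bool) :
    Set.range (extJ d m hd pr b (Λ := Λ)) = {I | ∀ p, I p = I (pr p)} := by
  ext I
  constructor
  · rintro ⟨J, rfl⟩ p
    by_cases h : epsd d m p = b
    · have h' : ¬ (epsd d m (pr p) = b) := by
        rw [hflip, h]; cases b <;> simp
      simp only [extJ, if_pos h, if_neg h', hinv]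
    · have h' : epsd d m (pr p) = b := by
        rw [hflip]; revert h; cases b <;> cases hh : epsd d m p <;> simp
      simp only [extJ, if_pos h', if_neg h]
  · intro hI
    refine ⟨fun k l => I (seg d m (jdx b k) l), ?_⟩
    funext p
    by_cases h : epsd d m p = b
    · rw [extJ, if_pos h, seg_of_idx hd b p h]
    · have h' : epsd d m (pr p) = b := by
        rw [hflip]; revert h; cases b <;> cases hh : epsd d m p <;> simp
      rw [extJ, if_neg h, seg_of_idx hd b (pr p) h']
      exact (hI p).symm

private lemma extJ_injective (hd : 1 ≤ d) (pr : Fin (2*d*m) → Fin (2*d*m)) (b : Bool) :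
    Function.Injective (extJ d m hd pr b (Λ := Λ)) :=
  Function.LeftInverse.injective
    (g := fun I (k : Fin m) (l : Fin d) => I (seg d m (jdx b k) l))
    (fun J => by funext k l; exact extJ_seg hd pr b J k l)

private def E2 (m : ℕ) : Bool × Fin m ≃ Fin (2*m) where
  toFun x := jdx x.1 x.2
  invFun j := (decide (j.1 % 2 = 0), ⟨j.1 / 2, by have := j.2; omega⟩)
  left_inv := by
    rintro ⟨b, k⟩
    have hk := k.2
    cases b <;>
      refine Prod.ext ?_ (Fin.ext ?_) <;>
        simp [jdx] <;> omega
  right_inv := by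
    intro j
    have hj := j.2
    apply Fin.ext
    show 2 * (j.1 / 2) + (bif decide (j.1 % 2 = 0) then 0 else 1) = j.1
    by_cases h : j.1 % 2 = 0 <;> simp [h] <;> omega
end B

private lemma exists_pairing {N : ℕ} (ε : Fin N → Bool)
    (π : Finpartition (univ : Finset (Fin N)))
    (heven : ∀ B ∈ π.parts, Even B.card)
    (halt : ∀ B ∈ π.parts, (Finset.sort B (· ≤ ·)).Chain' (fun a b => ε a ≠ ε b)) :
    ∃ pr : Fin N → Fin N, (∀ p, pr (pr p) = p) ∧ (∀ p, ε (pr p) = ! ε p) ∧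
      (∀ p, pr p ∈ π.part p) := by
  classical
  set f : Fin N → Fin N := fun p =>
    (Finset.sort (π.part p) (· ≤ ·)).getD
      (if (Finset.sort (π.part p) (· ≤ ·)).idxOf p % 2 = 0 then
        (Finset.sort (π.part p) (· ≤ ·)).idxOf p + 1
      else (Finset.sort (π.part p) (· ≤ ·)).idxOf p - 1) p with hf
  have key : ∀ p : Fin N, f p ∈ π.part p ∧ ε (f p) = ! ε p ∧ f (f p) = p := by
    intro p
    have hpmem : p ∈ π.part p := π.mem_part (mem_univ p)
    have hpart : π.part p ∈ π.parts := π.part_mem.2 (mem_univ p)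
    set L := Finset.sort (π.part p) (· ≤ ·) with hL
    have hmemL : p ∈ L := (Finset.mem_sort _).2 hpmem
    have hnd : L.Nodup := Finset.sort_nodup _ _
    have hlen : Even L.length := by
      rw [Finset.length_sort]; exact heven _ hpart
    have hchain := halt _ hpart
    simp only [List.Chain', List.isChain_iff_getElem, ← hL] at hchain
    set k := L.idxOf p with hk
    have hkl : k < L.length := List.idxOf_lt_length_iff.2 hmemL
    set t := if k % 2 = 0 then k + 1 else k - 1 with ht
    have htl : t < L.length := by
      rcases hlen with ⟨c, hc⟩
      by_cases h : k % 2 = 0 <;> simp only [ht, h, if_true, if_false] <;> omega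
    have hfp : f p = L[t] := by
      rw [hf]
      exact List.getD_eq_getElem L p htl
    have hLk : L[k] = p := List.getElem_idxOf hkl
    have hfpmem : f p ∈ π.part p := by
      rw [hfp, ← Finset.mem_sort (α := Fin N) (· ≤ ·)]
      exact List.getElem_mem _
    have hne : ε (f p) ≠ ε p ∨ ε p ≠ ε (f p) := by
      by_cases h : k % 2 = 0
      · right
        have h1 : k < L.length - 1 := by
          rcases hlen with ⟨c, hc⟩; omega
        have := hchain k (by omega)
        rw [hLk] at this
        rw [hfp]
        simpa only [ht, if_pos h] using this
      · left
        have hk1 : 1 ≤ k := by omega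
        have h1 : k - 1 < L.length - 1 := by omega
        have := hchain (k - 1) (by omega)
        have hk11 : k - 1 + 1 = k := by omega
        rw [hfp]
        simp only [ht, if_neg h]
        have h2 : ε L[k-1] ≠ ε L[k-1+1] := this
        simp only [hk11, hLk] at h2
        exact h2
    have hflip : ε (f p) = ! ε p := by
      rcases hne with h | h
      · cases hεp : ε p <;> cases hεf : ε (f p) <;> simp_all
      · cases hεp : ε p <;> cases hεf : ε (f p) <;> simp_all
    refine ⟨hfpmem, hflip, ?_⟩
    -- involution
    have hpartq : π.part (f p) = π.part p :=
      π.eq_of_mem_parts (π.part_mem.2 (mem_univ _)) hpart (π.mem_part (mem_univ _)) hfpmem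
    have hidxq : L.idxOf (f p) = t := by
      rw [hfp]; exact hnd.idxOf_getElem t htl
    have hfq : f (f p) = L.getD (if t % 2 = 0 then t + 1 else t - 1) (f p) := by
      generalize hq : f p = q at hpartq hidxq ⊢
      conv_lhs => rw [hf]
      simp only [hpartq, ← hL, hidxq]
    rw [hfq]
    have htk : (if t % 2 = 0 then t + 1 else t - 1) = k := by
      by_cases h : k % 2 = 0
      · have : t = k + 1 := by simp [ht, h]
        rw [this]
        have : ¬ ((k+1) % 2 = 0) := by omega
        simp [this]
      · have hk1 : 1 ≤ k := by omega
        have h2 : t = k - 1 := by simp [ht, h]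
        rw [h2]
        have : (k-1) % 2 = 0 := by omega
        simp [this]
        omega
    rw [htk, List.getD_eq_getElem L _ hkl, hLk]
  exact ⟨f, fun p => (key p).2.2, fun p => (key p).2.1, fun p => (key p).1⟩
private lemma finsum_mem_filter_eq {α : Type*} (f : α → ℝ) (s : Set α) (Ω : Finset α)
    [DecidablePred (· ∈ s)] (h : s ∩ Function.support f ⊆ ↑Ω) :
    ∑ᶠ i ∈ s, f i = ∑ i ∈ Ω.filter (· ∈ s), f i := by
  apply finsum_mem_eq_sum_of_inter_support_eq
  ext x
  simp only [Set.mem_inter_iff, Finset.coe_filter, Set.mem_setOf_eq, Function.mem_support]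
  constructor
  · rintro ⟨hs, hne⟩
    exact ⟨⟨Finset.mem_coe.1 (h ⟨hs, hne⟩), hs⟩, hne⟩
  · rintro ⟨⟨_, hs⟩, hne⟩
    exact ⟨hs, hne⟩

theorem scalars_partial_sum_estimate' {Λ : Type*} (d m : ℕ) (hd : 1 ≤ d) (hm : 1 ≤ m)
    (a : (Fin d → Λ) → ℂ) (ha : (Function.support a).Finite)
    (π : Finpartition (univ : Finset (Fin (2*d*m))))
    (heven : ∀ B ∈ π.parts, Even B.card)
    (halt : ∀ B ∈ π.parts, (Finset.sort B (· ≤ ·)).Chain' (fun x y => epsd d m x ≠ epsd d m y)) :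
    (∑ᶠ I ∈ {I : Fin (2*d*m) → Λ | ∀ B ∈ π.parts, ∀ s ∈ B, ∀ t ∈ B, I s = I t},
        ∏ j : Fin (2*m), ‖a (fun l => I (seg d m j l))‖) ≤
      (∑ᶠ i : Fin d → Λ, ‖a i‖ ^ 2) ^ m := by
  classical
  obtain ⟨pr, hinv, hflip, hblk⟩ := exists_pairing (epsd d m) π heven halt
  set g : (Fin d → Λ) → ℝ := fun i => ‖a i‖ ^ 2 with hg
  set T : Finset (Fin d → Λ) := ha.toFinset with hT
  have hmemT : ∀ i, a i ≠ 0 → i ∈ T := fun i h => ha.mem_toFinset.2 h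
  set V : Finset Λ := T.biUnion (fun i => Finset.image i Finset.univ) with hV
  set Ω : Finset (Fin (2*d*m) → Λ) := Fintype.piFinset (fun _ => V) with hΩ
  set F : (Fin (2*d*m) → Λ) → ℝ :=
    fun I => ∏ j : Fin (2*m), ‖a (fun l => I (seg d m j l))‖ with hF
  set X : Bool → (Fin (2*d*m) → Λ) → ℝ :=
    fun b I => ∏ k : Fin m, ‖a (fun l => I (seg d m (jdx b k) l))‖ ^ 2 with hX
  set S1 : Set (Fin (2*d*m) → Λ) :=
    {I | ∀ B ∈ π.parts, ∀ s ∈ B, ∀ t ∈ B, I s = I t} with hS1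
  set S2 : Set (Fin (2*d*m) → Λ) := {I | ∀ p, I p = I (pr p)} with hS2
  have hsub : S1 ⊆ S2 := by
    intro I hI p
    exact hI (π.part p) (π.part_mem.2 (mem_univ p)) p (π.mem_part (mem_univ p)) (pr p) (hblk p)
  have hF0 : ∀ I, 0 ≤ F I := fun I => Finset.prod_nonneg (fun _ _ => norm_nonneg _)
  have hval : ∀ (I : Fin (2*d*m) → Λ) (j : Fin (2*m)) (l : Fin d),
      a (fun l' => I (seg d m j l')) ≠ 0 → I (seg d m j l) ∈ V := by
    intro I j l hne
    exact Finset.mem_biUnion.2 ⟨_, hmemT _ hne, Finset.mem_image.2 ⟨l, mem_univ l, rfl⟩⟩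
  have hsurj : ∀ p : Fin (2*d*m), ∃ j l, seg d m j l = p := by
    intro p
    exact ⟨⟨p.1 / d, div_lt_two_m hd p⟩, ⟨p.1 % d, Nat.mod_lt _ hd⟩,
      Fin.ext (Nat.div_add_mod' p.1 d)⟩
  have hsuppF : Function.support F ⊆ ↑Ω := by
    intro I hI
    rw [Function.mem_support] at hI
    simp only [hΩ, Finset.mem_coe, Fintype.mem_piFinset]
    intro p
    obtain ⟨j, l, rfl⟩ := hsurj p
    have habs : ‖a (fun l' => I (seg d m j l'))‖ ≠ 0 := by
      intro h0
      exact hI (Finset.prod_eq_zero (mem_univ j) h0)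
    exact hval I j l (norm_ne_zero_iff.1 habs)
  have hvalX : ∀ b : Bool, ∀ I ∈ S2, X b I ≠ 0 → ∀ p, I p ∈ V := by
    intro b I hI2 hXne
    have hfac : ∀ k : Fin m, a (fun l => I (seg d m (jdx b k) l)) ≠ 0 := by
      intro k h0
      apply hXne
      refine Finset.prod_eq_zero (mem_univ k) ?_
      rw [h0]
      simp
    have hpos : ∀ p : Fin (2*d*m), epsd d m p = b → I p ∈ V := by
      intro p hp
      rw [← seg_of_idx hd b p hp]
      exact hval I _ _ (hfac _)
    intro p
    by_cases hp : epsd d m p = b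
    · exact hpos p hp
    · have hq : epsd d m (pr p) = b := by
        rw [hflip]
        revert hp
        cases b <;> cases hh : epsd d m p <;> simp
      rw [hI2 p]
      exact hpos _ hq
  have hsuppX : ∀ b : Bool, S2 ∩ Function.support (X b) ⊆ ↑Ω := by
    rintro b I ⟨hI2, hIs⟩
    rw [Function.mem_support] at hIs
    simp only [hΩ, Finset.mem_coe, Fintype.mem_piFinset]
    exact hvalX b I hI2 hIs
  have hT0 : ∀ i : Fin d → Λ, i ∉ T → g i = 0 := by
    intro i h
    have h0 : a i = 0 := by
      by_contra h'
      exact h (hmemT i h')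
    simp [hg, h0]
  have hsum_g : ∑ᶠ i : Fin d → Λ, ‖a i‖ ^ 2 = ∑ i ∈ T, g i := by
    apply finsum_eq_finset_sum_of_support_subset
    intro i hi
    rw [Function.mem_support] at hi
    by_contra hiT
    exact hi (hT0 i hiT)
  have e5 : ∀ b : Bool, ∑ᶠ I ∈ S2, X b I = (∑ i ∈ T, g i) ^ m := by
    intro b
    have hrange : S2 = Set.range (extJ d m hd pr b (Λ := Λ)) :=
      (range_extJ hd pr hinv hflip b).symm
    rw [hrange, finsum_mem_range (extJ_injective hd pr b)]
    have hXval : ∀ J : Fin m → Fin d → Λ, X b (extJ d m hd pr b J) = ∏ k : Fin m, g (J k) := by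
      intro J
      refine Finset.prod_congr rfl ?_
      intro k _
      have hseg : (fun l => extJ d m hd pr b J (seg d m (jdx b k) l)) = J k := by
        funext l
        exact extJ_seg hd pr b J k l
      rw [hseg]
    rw [finsum_congr hXval]
    have hpi : ∑ᶠ J : Fin m → Fin d → Λ, ∏ k, g (J k)
        = ∑ J ∈ Fintype.piFinset (fun _ : Fin m => T), ∏ k, g (J k) := by
      apply finsum_eq_finset_sum_of_support_subset
      intro J hJ
      rw [Function.mem_support] at hJ
      simp only [Finset.mem_coe, Fintype.mem_piFinset]
      intro k
      by_contra hk
      exact hJ (Finset.prod_eq_zero (mem_univ k) (hT0 _ hk))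
    rw [hpi, ← Finset.prod_univ_sum]
    rw [Finset.prod_const, Finset.card_univ, Fintype.card_fin]
  have hsplit : ∀ I : Fin (2*d*m) → Λ,
      F I = (∏ k : Fin m, ‖a (fun l => I (seg d m (jdx true k) l))‖)
        * (∏ k : Fin m, ‖a (fun l => I (seg d m (jdx false k) l))‖) := by
    intro I
    show (∏ j : Fin (2*m), ‖a (fun l => I (seg d m j l))‖) = _
    rw [← Fintype.prod_equiv (E2 m)
      (fun x : Bool × Fin m => ‖a (fun l => I (seg d m (jdx x.1 x.2) l))‖)
      (fun j => ‖a (fun l => I (seg d m j l))‖) (fun x => rfl)]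
    rw [Fintype.prod_prod_type, Fintype.prod_bool]
  have e3 : ∀ I, F I ≤ (X true I + X false I) / 2 := by
    intro I
    rw [hsplit I]
    have hP2 : (∏ k : Fin m, ‖a (fun l => I (seg d m (jdx true k) l))‖) ^ 2
        = X true I := by
      rw [← Finset.prod_pow]
    have hQ2 : (∏ k : Fin m, ‖a (fun l => I (seg d m (jdx false k) l))‖) ^ 2
        = X false I := by
      rw [← Finset.prod_pow]
    have h2 := two_mul_le_add_sq
      (∏ k : Fin m, ‖a (fun l => I (seg d m (jdx true k) l))‖)
      (∏ k : Fin m, ‖a (fun l => I (seg d m (jdx false k) l))‖)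
    rw [hP2, hQ2] at h2
    linarith
  have hfilsub : Ω.filter (· ∈ S1) ⊆ Ω.filter (· ∈ S2) := by
    intro I hI
    rw [Finset.mem_filter] at hI ⊢
    exact ⟨hI.1, hsub hI.2⟩
  show ∑ᶠ I ∈ S1, F I ≤ (∑ᶠ i : Fin d → Λ, ‖a i‖ ^ 2) ^ m
  calc ∑ᶠ I ∈ S1, F I = ∑ I ∈ Ω.filter (· ∈ S1), F I :=
        finsum_mem_filter_eq F S1 Ω (fun I hI => hsuppF hI.2)
    _ ≤ ∑ I ∈ Ω.filter (· ∈ S2), F I :=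
        Finset.sum_le_sum_of_subset_of_nonneg hfilsub (fun I _ _ => hF0 I)
    _ ≤ ∑ I ∈ Ω.filter (· ∈ S2), (X true I + X false I) / 2 :=
        Finset.sum_le_sum (fun I _ => e3 I)
    _ = ((∑ I ∈ Ω.filter (· ∈ S2), X true I) + ∑ I ∈ Ω.filter (· ∈ S2), X false I) / 2 := by
        rw [← Finset.sum_add_distrib, Finset.sum_div]
    _ = ((∑ᶠ I ∈ S2, X true I) + (∑ᶠ I ∈ S2, X false I)) / 2 := by
        rw [finsum_mem_filter_eq (X true) S2 Ω (hsuppX true),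
          finsum_mem_filter_eq (X false) S2 Ω (hsuppX false)]
    _ = (∑ i ∈ T, g i) ^ m := by
        rw [e5 true, e5 false]
        ring
    _ = (∑ᶠ i : Fin d → Λ, ‖a i‖ ^ 2) ^ m := by rw [hsum_g]

/-- Lemma 3.7 of the paper: for a finitely supported family
`a` of complex numbers and an `ε_d`-partition `π` of `[2dm]`,
`Σ_{ker I ≥ π} |a(i₁)|⋯|a(i_{2m})| ≤ (Σ_i |a(i)|²)^m`. -/
theorem scalars_partial_sum_estimate {Λ : Type*} (d m : ℕ) (hd : 1 ≤ d) (hm : 1 ≤ m)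
    (a : (Fin d → Λ) → ℂ) (ha : (Function.support a).Finite)
    (π : Finpartition (univ : Finset (Fin (2*d*m))))
    (hπ : EpsPartition (epsd d m) π) :
    (∑ᶠ I ∈ {I : Fin (2*d*m) → Λ | KerGe π I},
        ∏ j : Fin (2*m), ‖a (fun l => I (seg d m j l))‖) ≤
      (∑ᶠ i : Fin d → Λ, ‖a i‖ ^ 2) ^ m := by
  exact scalars_partial_sum_estimate' d m hd hm a ha π hπ.1 hπ.2
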